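/- Let g : [1,∞) → ℝ be continuous, suppose there is a constant C with |g(ε)| ≤ C(1 + ε²) for all ε ≥ 1, and suppose g(ε)/ε² → c as ε → ∞ for some real c. Then the ultra-relativistic (z → 0⁺) limit lim_{z→0⁺} ( ∫₁^∞ g(ε)·e^{−zε} dε ) / ( ∫₁^∞ ε·√(ε² − 1)·e^{−zε} dε ) = c holds. (Applied to g = λ_c² with λ_c(ε)/ε → ζ̃, this yields the ultra-relativistic mass accretion rate lim_{z→0} Ṁ/n_∞ = π m ζ̃².) -/

import Mathlib

open Real Filter Set Topology MeasureTheory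

lemma myIntBound : IntegrableOn (fun u : ℝ => (1 + u ^ 2) * Real.exp (-u)) (Ioi 0) := by
  have h1 : IntegrableOn (fun u : ℝ => Real.exp (-u)) (Ioi 0) := by
    have := exp_neg_integrableOn_Ioi 0 (one_pos (α := ℝ))
    refine this.congr_fun (fun x _ => by norm_num) measurableSet_Ioi
  have h3 : IntegrableOn (fun u : ℝ => Real.exp (-u) * u ^ ((3:ℝ)-1)) (Ioi 0) :=
    Real.GammaIntegral_convergent (by norm_num)
  have h3' : IntegrableOn (fun u : ℝ => u ^ 2 * Real.exp (-u)) (Ioi 0) := by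
    refine (h3.congr_fun ?_ measurableSet_Ioi)
    intro x hx
    dsimp only
    rw [show ((3:ℝ)-1) = ((2:ℕ):ℝ) by norm_num, Real.rpow_natCast]
    ring
  refine (h1.add h3').congr ?_
  filter_upwards with x
  simp only [Pi.add_apply]
  ring

lemma myIntVal : ∫ u in Ioi (0:ℝ), u ^ 2 * Real.exp (-u) = 2 := by
  have h := Real.Gamma_eq_integral (by norm_num : (0:ℝ) < 3)
  have h2 : Real.Gamma 3 = 2 := by
    rw [show (3:ℝ) = ((2:ℕ):ℝ) + 1 by norm_num, Real.Gamma_nat_eq_factorial]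
    norm_num [Nat.factorial]
  calc ∫ u in Ioi (0:ℝ), u ^ 2 * Real.exp (-u)
      = ∫ x in Ioi (0:ℝ), Real.exp (-x) * x ^ ((3:ℝ)-1) := by
        refine setIntegral_congr_fun measurableSet_Ioi (fun x hx => ?_)
        rw [show ((3:ℝ)-1) = ((2:ℕ):ℝ) by norm_num, Real.rpow_natCast]
        ring
    _ = Real.Gamma 3 := h.symm
    _ = 2 := h2

lemma stmt14_key (g : ℝ → ℝ) (c C : ℝ)
    (hcont : ContinuousOn g (Set.Ici 1))
    (hbdd : ∀ ε : ℝ, 1 ≤ ε → |g ε| ≤ C * (1 + ε ^ 2))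
    (hlim : Tendsto (fun ε : ℝ => g ε / ε ^ 2) atTop (𝓝 c)) :
    Tendsto (fun z : ℝ => z ^ 3 * ∫ ε in Set.Ici (1:ℝ), g ε * Real.exp (-z * ε))
      (𝓝[>] 0) (𝓝 (2 * c)) := by
  have hC : 0 ≤ C := by
    have h := hbdd 1 le_rfl
    have := abs_nonneg (g 1)
    nlinarith
  -- the rescaled integrand
  set F : ℝ → ℝ → ℝ := fun z u => (Ioi z).indicator (fun u => z ^ 2 * g (u / z) * Real.exp (-u)) u with hF
  -- step A: rewrite
  have stepA : ∀ᶠ z in 𝓝[>] (0:ℝ),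
      z ^ 3 * ∫ ε in Set.Ici (1:ℝ), g ε * Real.exp (-z * ε)
        = ∫ u in Ioi (0:ℝ), F z u := by
    filter_upwards [self_mem_nhdsWithin] with z hz
    have hz : (0:ℝ) < z := hz
    have h1 : ∫ ε in Set.Ici (1:ℝ), g ε * Real.exp (-z * ε)
        = ∫ ε in Ioi (1:ℝ), g ε * Real.exp (-z * ε) := integral_Ici_eq_integral_Ioi
    have h2 : ∫ ε in Ioi (1:ℝ), g ε * Real.exp (-z * ε)
        = ∫ x in Ioi (1:ℝ), (fun u => g (u / z) * Real.exp (-u)) (z * x) := by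
      refine setIntegral_congr_fun measurableSet_Ioi (fun x hx => ?_)
      dsimp only
      rw [mul_div_cancel_left₀ _ hz.ne']
      ring_nf
    have h3 := integral_comp_mul_left_Ioi (fun u => g (u / z) * Real.exp (-u)) 1 hz
    rw [h1, h2, h3, mul_one, smul_eq_mul]
    rw [show z ^ 3 * (z⁻¹ * ∫ u in Ioi z, g (u / z) * Real.exp (-u))
        = z ^ 2 * ∫ u in Ioi z, g (u / z) * Real.exp (-u) by
      field_simp]
    rw [← integral_const_mul]
    have h4 : ∫ u in Ioi (0:ℝ), F z u
        = ∫ u in Ioi (0:ℝ) ∩ Ioi z, z ^ 2 * (g (u / z) * Real.exp (-u)) := by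
      rw [hF]
      rw [setIntegral_indicator measurableSet_Ioi]
      exact setIntegral_congr_fun (measurableSet_Ioi.inter measurableSet_Ioi)
        (fun x hx => by ring)
    rw [h4, Set.inter_eq_self_of_subset_right (Ioi_subset_Ioi hz.le)]
  -- step B: dominated convergence
  have stepB : Tendsto (fun z => ∫ u in Ioi (0:ℝ), F z u) (𝓝[>] (0:ℝ))
      (𝓝 (∫ u in Ioi (0:ℝ), c * (u ^ 2 * Real.exp (-u)))) := by
    refine tendsto_integral_filter_of_dominated_convergence
      (fun u => C * ((1 + u ^ 2) * Real.exp (-u))) ?_ ?_ ?_ ?_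
    · -- measurability
      filter_upwards [self_mem_nhdsWithin] with z hz
      have hz : (0:ℝ) < z := hz
      have hmaps : MapsTo (fun u : ℝ => u / z) (Ici z) (Ici 1) := by
        intro u hu
        exact (one_le_div hz).mpr hu
      have hcont2 : ContinuousOn (fun u : ℝ => z ^ 2 * g (u / z) * Real.exp (-u)) (Ici z) := by
        refine ContinuousOn.mul (continuousOn_const.mul ?_) (Real.continuous_exp.comp continuous_neg).continuousOn
        exact hcont.comp (continuousOn_id.div_const z) hmaps
      have : AEStronglyMeasurable (F z) volume := by
        rw [hF]
        rw [aestronglyMeasurable_indicator_iff measurableSet_Ioi]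
        exact (hcont2.mono Ioi_subset_Ici_self).aestronglyMeasurable measurableSet_Ioi
      exact this.restrict
    · -- bound
      filter_upwards [Ioo_mem_nhdsGT_of_mem (by norm_num : (0:ℝ) ∈ Ico (0:ℝ) 1)] with z hz
      refine Filter.Eventually.of_forall (fun u => ?_)
      obtain ⟨hz0, hz1⟩ := hz
      by_cases hu : u ∈ Ioi z
      · rw [hF]
        simp only [indicator_of_mem hu]
        have hu1 : (1:ℝ) ≤ u / z := (one_le_div hz0).mpr hu.le
        have hb := hbdd (u / z) hu1
        have he : (0:ℝ) < Real.exp (-u) := Real.exp_pos _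
        have hsq : z ^ 2 * (1 + (u / z) ^ 2) = z ^ 2 + u ^ 2 := by
          field_simp
        rw [Real.norm_eq_abs, abs_mul, abs_mul, abs_of_pos he,
          abs_of_nonneg (sq_nonneg z)]
        have h5 : z ^ 2 * |g (u / z)| ≤ C * (z ^ 2 + u ^ 2) := by
          calc z ^ 2 * |g (u / z)| ≤ z ^ 2 * (C * (1 + (u / z) ^ 2)) := by
                exact mul_le_mul_of_nonneg_left hb (sq_nonneg z)
            _ = C * (z ^ 2 * (1 + (u / z) ^ 2)) := by ring
            _ = C * (z ^ 2 + u ^ 2) := by rw [hsq]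
        calc z ^ 2 * |g (u / z)| * Real.exp (-u)
            ≤ C * (z ^ 2 + u ^ 2) * Real.exp (-u) := by
              exact mul_le_mul_of_nonneg_right h5 he.le
          _ ≤ C * ((1 + u ^ 2) * Real.exp (-u)) := by
              have hzz : z ^ 2 ≤ 1 := by nlinarith
              have : C * (z ^ 2 + u ^ 2) ≤ C * (1 + u ^ 2) :=
                mul_le_mul_of_nonneg_left (by linarith) hC
              calc C * (z ^ 2 + u ^ 2) * Real.exp (-u)
                  ≤ C * (1 + u ^ 2) * Real.exp (-u) := mul_le_mul_of_nonneg_right this he.le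
                _ = C * ((1 + u ^ 2) * Real.exp (-u)) := by ring
      · rw [hF]
        simp only [indicator_of_notMem hu]
        have he : (0:ℝ) < Real.exp (-u) := Real.exp_pos _
        simp only [norm_zero]
        positivity
    · -- integrability of the bound
      exact (myIntBound.const_mul C)
    · -- pointwise limit
      rw [ae_restrict_iff' measurableSet_Ioi]
      refine Filter.Eventually.of_forall (fun u hu => ?_)
      have hu : (0:ℝ) < u := hu
      have htop : Tendsto (fun z : ℝ => u / z) (𝓝[>] 0) atTop := by
        have := tendsto_inv_nhdsGT_zero.const_mul_atTop hu
        simpa [div_eq_mul_inv] using this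
      have h6 : Tendsto (fun z : ℝ => g (u / z) / (u / z) ^ 2) (𝓝[>] 0) (𝓝 c) :=
        hlim.comp htop
      have h7 : Tendsto (fun z : ℝ => g (u / z) / (u / z) ^ 2 * (u ^ 2 * Real.exp (-u)))
          (𝓝[>] 0) (𝓝 (c * (u ^ 2 * Real.exp (-u)))) := h6.mul_const _
      refine h7.congr' ?_
      filter_upwards [Ioo_mem_nhdsGT_of_mem (show (0:ℝ) ∈ Ico 0 u from ⟨le_rfl, hu⟩)] with z hz
      obtain ⟨hz0, hzu⟩ := hz
      rw [hF]
      have hmem : u ∈ Ioi z := hzu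
      simp only [indicator_of_mem hmem]
      have hdz : (u / z) ≠ 0 := by positivity
      field_simp
  rw [show (2:ℝ) * c = ∫ u in Ioi (0:ℝ), c * (u ^ 2 * Real.exp (-u)) by
    rw [integral_const_mul, myIntVal]; ring]
  exact stepB.congr' (stepA.mono fun z h => h.symm)

/-- ultra-relativistic (z → 0⁺) limit:
for continuous `g : [1,∞) → ℝ` with `|g(ε)| ≤ C(1+ε²)` and `g(ε)/ε² → c` as `ε → ∞`,
`lim_{z→0⁺} (∫₁^∞ g(ε) e^{−zε} dε)/(∫₁^∞ ε√(ε²−1) e^{−zε} dε) = c`. -/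
theorem stmt14
    (g : ℝ → ℝ) (c : ℝ)
    (hcont : ContinuousOn g (Set.Ici 1))
    (hbdd : ∃ C : ℝ, ∀ ε : ℝ, 1 ≤ ε → |g ε| ≤ C * (1 + ε ^ 2))
    (hlim : Tendsto (fun ε : ℝ => g ε / ε ^ 2) atTop (𝓝 c)) :
    Tendsto (fun z : ℝ =>
        (∫ ε in Set.Ici (1 : ℝ), g ε * Real.exp (-z * ε)) /
          (∫ ε in Set.Ici (1 : ℝ), ε * Real.sqrt (ε ^ 2 - 1) * Real.exp (-z * ε)))
      (𝓝[>] 0) (𝓝 c) := by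
  obtain ⟨C, hbdd⟩ := hbdd
  have hN := stmt14_key g c C hcont hbdd hlim
  -- the denominator function
  have hcontD : ContinuousOn (fun ε : ℝ => ε * Real.sqrt (ε ^ 2 - 1)) (Set.Ici 1) :=
    (continuous_id.mul (Real.continuous_sqrt.comp
      ((continuous_pow 2).sub continuous_const))).continuousOn
  have hbddD : ∀ ε : ℝ, 1 ≤ ε → |ε * Real.sqrt (ε ^ 2 - 1)| ≤ 1 * (1 + ε ^ 2) := by
    intro ε hε
    have hε0 : (0:ℝ) < ε := by linarith
    have hs0 : 0 ≤ Real.sqrt (ε ^ 2 - 1) := Real.sqrt_nonneg _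
    have hs : Real.sqrt (ε ^ 2 - 1) ≤ ε := by
      have h := Real.sqrt_le_sqrt (show ε ^ 2 - 1 ≤ ε ^ 2 by linarith)
      rwa [Real.sqrt_sq hε0.le] at h
    rw [abs_of_nonneg (by positivity)]
    nlinarith
  have hlimD : Tendsto (fun ε : ℝ => ε * Real.sqrt (ε ^ 2 - 1) / ε ^ 2) atTop (𝓝 1) := by
    have h1 : Tendsto (fun ε : ℝ => Real.sqrt (1 - (ε⁻¹) ^ 2)) atTop (𝓝 1) := by
      have h0 : Tendsto (fun ε : ℝ => 1 - (ε⁻¹) ^ 2) atTop (𝓝 (1 - 0 ^ 2)) :=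
        tendsto_const_nhds.sub (tendsto_inv_atTop_zero.pow 2)
      have := (Real.continuous_sqrt.tendsto (1 - 0 ^ 2)).comp h0
      simpa [Function.comp_def] using this
    refine h1.congr' ?_
    filter_upwards [eventually_ge_atTop (1:ℝ)] with ε hε
    have hε0 : (0:ℝ) < ε := by linarith
    rw [show (1 : ℝ) - (ε⁻¹) ^ 2 = (ε ^ 2 - 1) / ε ^ 2 by field_simp]
    rw [Real.sqrt_div (by nlinarith) (ε ^ 2), Real.sqrt_sq_eq_abs, abs_of_pos hε0]
    field_simp
  have hD := stmt14_key (fun ε => ε * Real.sqrt (ε ^ 2 - 1)) 1 1 hcontD hbddD hlimD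
  have hdiv := hN.div hD (by norm_num : (2:ℝ) * 1 ≠ 0)
  have hc : (2:ℝ) * c / (2 * 1) = c := by ring
  rw [hc] at hdiv
  refine hdiv.congr' ?_
  filter_upwards [self_mem_nhdsWithin] with z hz
  have hz : (0:ℝ) < z := hz
  exact mul_div_mul_left _ _ (pow_ne_zero 3 hz.ne')
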